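/- Suppose T is relatively (ω,ω)-categorical, M is a model of T, a a finite tuple from M, and M₀ ≺ M a countable elementary substructure containing a. If φ(x) over P(M₀) isolates tp(a/P(M₀)), then φ(x) isolates tp(a/P(M)). -/

import Mathlib

open FirstOrder FirstOrder.Language FirstOrder.Language.Structure

universe u v

namespace RelCatPaper

variable {L : FirstOrder.Language.{u, v}}

/-- The language is relational: no function symbols. -/
def Relational (L : FirstOrder.Language.{u, v}) : Prop := ∀ n, IsEmpty (L.Functions n)

/-- `T` has quantifier elimination. -/
def HasQE (T : L.Theory) : Prop :=
  ∀ (n : ℕ) (φ : L.Formula (Fin n)), ∃ ψ : L.Formula (Fin n), ψ.IsQF ∧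
    ∀ (M : Type (max u v)) [L.Structure M], M ⊨ T →
      ∀ v : Fin n → M, φ.Realize v ↔ ψ.Realize v

variable (p : L.Relations 1)

/-- The set of realizations of the distinguished unary predicate `p` in `M`. -/
def Pset (M : Type*) [L.Structure M] : Set M := {x | RelMap p ![x]}

/-- The `P`-part of `M` as a substructure (the language being relational). -/
def Psub (hrel : Relational L) (M : Type*) [L.Structure M] : L.Substructure M :=
  ⟨Pset p M, fun {n} f => (hrel n).elim f⟩

/-- `T` says that `P` is infinite. -/
def PInfinite (T : L.Theory) : Prop :=
  ∀ (M : Type (max u v)) [L.Structure M], M ⊨ T → (Pset p M).Infinite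

/-- A subset `A` of `M` is *complete*: any formula over `A` realized by an element of `P`
is realized by an element of `P ∩ A`. -/
def CompleteSet (M : Type*) [L.Structure M] (A : Set M) : Prop :=
  ∀ (n : ℕ) (φ : L.Formula (Fin 1 ⊕ Fin n)) (c : Fin n → M), (∀ i, c i ∈ A) →
    (∃ x : M, x ∈ Pset p M ∧ φ.Realize (Sum.elim (fun _ => x) c)) →
    ∃ b : M, b ∈ A ∧ b ∈ Pset p M ∧ φ.Realize (Sum.elim (fun _ => b) c)

/-- `tp(a/P(M))` is isolated (by a formula over `P(M)`). -/
def IsolatedOverP (M : Type*) [L.Structure M] {m : ℕ} (a : Fin m → M) : Prop :=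
  ∃ (n : ℕ) (φ : L.Formula (Fin m ⊕ Fin n)) (c : Fin n → M),
    (∀ i, c i ∈ Pset p M) ∧ φ.Realize (Sum.elim a c) ∧
    ∀ (k : ℕ) (ψ : L.Formula (Fin m ⊕ Fin k)) (d : Fin k → M), (∀ i, d i ∈ Pset p M) →
      ψ.Realize (Sum.elim a d) →
      ∀ a' : Fin m → M, φ.Realize (Sum.elim a' c) → ψ.Realize (Sum.elim a' d)

/-- `M` is atomic over its `P`-part. -/
def AtomicOverP (M : Type*) [L.Structure M] : Prop :=
  ∀ (m : ℕ) (a : Fin m → M), IsolatedOverP p M a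

/-- `T` is relatively `(ω,ω)`-categorical. -/
def RelativelyCatCC (hrel : Relational L) (T : L.Theory) : Prop :=
  ∀ (M₁ M₂ : Type (max u v)) [L.Structure M₁] [L.Structure M₂],
    M₁ ⊨ T → M₂ ⊨ T → Countable M₁ → Countable M₂ →
    ∀ f : (Psub p hrel M₁) ≃[L] (Psub p hrel M₂),
      ∃ g : M₁ ≃[L] M₂, ∀ x : Psub p hrel M₁, g (x : M₁) = (f x : M₂)

/-- `T` is relatively `ω`-categorical (the `P`-parts are countable). -/
def RelativelyCatOmega (hrel : Relational L) (T : L.Theory) : Prop :=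
  ∀ (M₁ M₂ : Type (max u v)) [L.Structure M₁] [L.Structure M₂],
    M₁ ⊨ T → M₂ ⊨ T → Countable (Psub p hrel M₁) → Countable (Psub p hrel M₂) →
    ∀ f : (Psub p hrel M₁) ≃[L] (Psub p hrel M₂),
      ∃ g : M₁ ≃[L] M₂, ∀ x : Psub p hrel M₁, g (x : M₁) = (f x : M₂)

/-- `T` is relatively categorical. -/
def RelativelyCat (hrel : Relational L) (T : L.Theory) : Prop :=
  ∀ (M₁ M₂ : Type (max u v)) [L.Structure M₁] [L.Structure M₂],
    M₁ ⊨ T → M₂ ⊨ T →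
    ∀ f : (Psub p hrel M₁) ≃[L] (Psub p hrel M₂),
      ∃ g : M₁ ≃[L] M₂, ∀ x : Psub p hrel M₁, g (x : M₁) = (f x : M₂)

/-- `TP` is the common complete theory of the `P`-parts of models of `T`. -/
def IsPTheory (hrel : Relational L) (T TP : L.Theory) : Prop :=
  TP.IsComplete ∧
    ∀ (M : Type (max u v)) [L.Structure M], M ⊨ T → (Psub p hrel M : Type (max u v)) ⊨ TP

/-- `x` is algebraic over `A` in `M`. -/
def InAcl (M : Type*) [L.Structure M] (A : Set M) (x : M) : Prop :=
  ∃ (n : ℕ) (φ : L.Formula (Fin 1 ⊕ Fin n)) (c : Fin n → M), (∀ i, c i ∈ A) ∧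
    φ.Realize (Sum.elim (fun _ => x) c) ∧
    {y : M | φ.Realize (Sum.elim (fun _ => y) c)}.Finite

/-- `M` is almost internal to `P`: `M ⊆ acl(P(M) ∪ a)` for some finite tuple `a`. -/
def AlmostInternal (M : Type*) [L.Structure M] : Prop :=
  ∃ (m : ℕ) (a : Fin m → M), ∀ x : M, InAcl (L := L) M (Pset p M ∪ Set.range a) x

/-- `M` is `1`-coanalyzable in `P`: there is a definable relation `R ⊆ M × P^ℓ`
projecting onto `M` with all fibers over tuples from `P` finite. -/
def OneCoanalyzable (M : Type*) [L.Structure M] : Prop :=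
  ∃ (ℓ n : ℕ) (φ : L.Formula ((Fin 1 ⊕ Fin ℓ) ⊕ Fin n)) (e : Fin n → M),
    (∀ x : M, ∃ c : Fin ℓ → M, (∀ i, c i ∈ Pset p M) ∧
      φ.Realize (Sum.elim (Sum.elim (fun _ => x) c) e)) ∧
    ∀ c : Fin ℓ → M, (∀ i, c i ∈ Pset p M) →
      {x : M | φ.Realize (Sum.elim (Sum.elim (fun _ => x) c) e)}.Finite

/-- `M` is saturated: every finitely realized set of formulas in one variable over fewer
than `#M` parameters is realized. -/
def IsSaturated (M : Type w) [L.Structure M] : Prop :=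
  ∀ (ι : Type w), Cardinal.mk ι < Cardinal.mk M → ∀ (c : ι → M)
    (Φ : Set (L.Formula (Fin 1 ⊕ ι))),
    (∀ Φ₀ : Finset (L.Formula (Fin 1 ⊕ ι)), ↑Φ₀ ⊆ Φ →
      ∃ x : M, ∀ φ ∈ Φ₀, Formula.Realize φ (Sum.elim (fun _ => x) c)) →
    ∃ x : M, ∀ φ ∈ Φ, Formula.Realize φ (Sum.elim (fun _ => x) c)

/-- Types over the `P`-part are uniformly definable (stable embeddedness of `P`). -/
def StablyEmbedded (T : L.Theory) : Prop :=
  ∀ (m k : ℕ) (ψ : L.Formula (Fin m ⊕ Fin k)),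
    ∃ (n : ℕ) (χ : L.Formula (Fin k ⊕ Fin n)),
      ∀ (M : Type (max u v)) [L.Structure M], M ⊨ T →
        ∀ a : Fin m → M, ∃ c : Fin n → M, (∀ i, c i ∈ Pset p M) ∧
          ∀ b : Fin k → M, (∀ i, b i ∈ Pset p M) →
            (ψ.Realize (Sum.elim a b) ↔ χ.Realize (Sum.elim b c))


/-- `M` is `ℵ₁`-saturated (countably saturated). -/
def CountablySaturated (M : Type w) [L.Structure M] : Prop :=
  ∀ (c : ℕ → M) (Φ : Set (L.Formula (Fin 1 ⊕ ℕ))),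
    (∀ Φ₀ : Finset (L.Formula (Fin 1 ⊕ ℕ)), ↑Φ₀ ⊆ Φ →
      ∃ x : M, ∀ φ ∈ Φ₀, Formula.Realize φ (Sum.elim (fun _ => x) c)) →
    ∃ x : M, ∀ φ ∈ Φ, Formula.Realize φ (Sum.elim (fun _ => x) c)

/-- `(T,P)` is `1`-cardinal: every model of `T` has the same cardinality as its `P`-part. -/
def OneCardinal (T : L.Theory) : Prop :=
  ∀ (M : Type (max u v)) [L.Structure M], M ⊨ T → Cardinal.mk M = Cardinal.mk (Pset p M)

/-- transfer of isolation from over P(M₀) to over P(M). -/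
theorem isolation_transfer
    {L : FirstOrder.Language.{u, v}} [Countable L.Symbols]
    (p : L.Relations 1) (hrel : Relational L)
    (T : L.Theory) (hcomp : T.IsComplete) (hqe : HasQE T) (hinf : PInfinite p T)
    (hcat : RelativelyCatCC p hrel T)
    (M : Type (max u v)) [L.Structure M] (hM : M ⊨ T)
    (M₀ : L.ElementarySubstructure M) (hM₀c : Countable M₀)
    {m : ℕ} (a : Fin m → M) (ha : ∀ i, a i ∈ M₀)
    {n : ℕ} (φ : L.Formula (Fin m ⊕ Fin n)) (c : Fin n → M)
    (hc : ∀ i, c i ∈ (M₀ : Set M) ∩ Pset p M)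
    (hφa : φ.Realize (Sum.elim a c))
    (hiso₀ : ∀ (k : ℕ) (ψ : L.Formula (Fin m ⊕ Fin k)) (d : Fin k → M),
      (∀ i, d i ∈ (M₀ : Set M) ∩ Pset p M) → ψ.Realize (Sum.elim a d) →
      ∀ a' : Fin m → M, φ.Realize (Sum.elim a' c) → ψ.Realize (Sum.elim a' d)) :
    ∀ (k : ℕ) (ψ : L.Formula (Fin m ⊕ Fin k)) (d : Fin k → M),
      (∀ i, d i ∈ Pset p M) → ψ.Realize (Sum.elim a d) →
      ∀ a' : Fin m → M, φ.Realize (Sum.elim a' c) → ψ.Realize (Sum.elim a' d) := by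
  classical
  intro k ψ d hd hψad a' hφa'
  by_contra hnot
  -- variable bookkeeping
  -- outer variables: (Fin m ⊕ Fin n) for (a, c); existential block: Fin k (for d)
  -- inner existential block: Fin m (for a')
  let φ₂ : L.Formula (Fin m ⊕ ((Fin m ⊕ Fin n) ⊕ Fin k)) :=
    φ.relabel (Sum.map id (fun j => Sum.inl (Sum.inr j)))
  let ψ₂ : L.Formula (Fin m ⊕ ((Fin m ⊕ Fin n) ⊕ Fin k)) :=
    ψ.relabel (Sum.map id Sum.inr)
  let inner : L.Formula ((Fin m ⊕ Fin n) ⊕ Fin k) :=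
    ((φ₂ ⊓ ψ₂.not).relabel (Sum.elim Sum.inr Sum.inl)).iExs (Fin m)
  let PP : L.Formula ((Fin m ⊕ Fin n) ⊕ Fin k) :=
    BoundedFormula.iInf
      (fun j : Fin k => p.formula₁ (Term.var (Sum.inr j)))
  let ψ₁ : L.Formula ((Fin m ⊕ Fin n) ⊕ Fin k) :=
    ψ.relabel (Sum.map Sum.inl id)
  let body : L.Formula ((Fin m ⊕ Fin n) ⊕ Fin k) := (PP ⊓ ψ₁) ⊓ inner
  let Θ : L.Formula (Fin m ⊕ Fin n) := body.iExs (Fin k)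
  -- realization of `body` at an arbitrary assignment
  have hbody : ∀ (e : Fin m → M) (f : Fin n → M) (g : Fin k → M),
      body.Realize (Sum.elim (Sum.elim e f) g) ↔
        ((∀ j, g j ∈ Pset p M) ∧ ψ.Realize (Sum.elim e g)) ∧
          ∃ e' : Fin m → M, φ.Realize (Sum.elim e' f) ∧ ¬ψ.Realize (Sum.elim e' g) := by
    intro e f g
    have hPP : PP.Realize (Sum.elim (Sum.elim e f) g) ↔ ∀ j, g j ∈ Pset p M := by
      have h0 : PP.Realize (Sum.elim (Sum.elim e f) g) ↔ ∀ j ∈ Finset.univ,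
          ((p.formula₁ (Term.var (Sum.inr j)) : L.Formula ((Fin m ⊕ Fin n) ⊕ Fin k))).Realize
            (Sum.elim (Sum.elim e f) g) :=
        by simp only [PP, Formula.Realize, BoundedFormula.realize_iInf, Finset.mem_univ,
          forall_const]
      rw [h0]
      simp [Pset, Formula.realize_rel₁]
    have hψ₁ : ψ₁.Realize (Sum.elim (Sum.elim e f) g) ↔ ψ.Realize (Sum.elim e g) := by
      simp only [ψ₁]
      rw [Formula.realize_relabel]
      have : (Sum.elim (Sum.elim e f) g) ∘ (Sum.map Sum.inl id) = Sum.elim e g := by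
        funext x; cases x <;> rfl
      rw [this]
    have hinner : inner.Realize (Sum.elim (Sum.elim e f) g) ↔
        ∃ e' : Fin m → M, φ.Realize (Sum.elim e' f) ∧ ¬ψ.Realize (Sum.elim e' g) := by
      simp only [inner]
      rw [Formula.realize_iExs]
      refine exists_congr fun e' => ?_
      rw [Formula.realize_relabel]
      have hv : (Sum.elim (Sum.elim (Sum.elim e f) g) e' ∘
          (Sum.elim Sum.inr Sum.inl : Fin m ⊕ ((Fin m ⊕ Fin n) ⊕ Fin k) → _))
          = Sum.elim e' (Sum.elim (Sum.elim e f) g) := by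
        funext x; cases x <;> rfl
      rw [hv]
      simp only [φ₂, ψ₂]
      rw [Formula.realize_inf, Formula.realize_not,
        Formula.realize_relabel, Formula.realize_relabel]
      have h1 : (Sum.elim e' (Sum.elim (Sum.elim e f) g)) ∘
          (Sum.map id (fun j => Sum.inl (Sum.inr j))) = Sum.elim e' f := by
        funext x; cases x <;> rfl
      have h2 : (Sum.elim e' (Sum.elim (Sum.elim e f) g)) ∘
          (Sum.map id Sum.inr) = Sum.elim e' g := by
        funext x; cases x <;> rfl
      rw [h1, h2]
    simp only [body]
    rw [Formula.realize_inf, Formula.realize_inf, hPP, hψ₁, hinner]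
  -- Θ is realized in M at (a, c)
  have hΘ : Θ.Realize (Sum.elim a c) := by
    simp only [Θ]
    rw [Formula.realize_iExs]
    refine ⟨d, ?_⟩
    have : (fun x => Sum.elim (Sum.elim a c) d (id x)) = Sum.elim (Sum.elim a c) d := rfl
    rw [hbody]
    exact ⟨⟨hd, hψad⟩, a', hφa', hnot⟩
  -- transfer to M₀
  let at' : Fin m → M₀ := fun i => ⟨a i, ha i⟩
  let ct : Fin n → M₀ := fun i => ⟨c i, (hc i).1⟩
  have hcoe : (Subtype.val ∘ Sum.elim at' ct) = Sum.elim a c := by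
    funext x; cases x <;> rfl
  have hΘ₀ : Θ.Realize (M := M₀) (Sum.elim at' ct) := by
    have := (M₀.subtype.map_formula Θ (Sum.elim at' ct))
    rw [ElementarySubstructure.coe_subtype] at this
    rw [← this, hcoe]
    exact hΘ
  simp only [Θ] at hΘ₀
  rw [Formula.realize_iExs] at hΘ₀
  obtain ⟨dt, hdt⟩ := hΘ₀
  have hvt : (fun x => Sum.elim (Sum.elim at' ct) dt (id x))
      = Sum.elim (Sum.elim at' ct) dt := rfl
  -- push the body realization back down to M
  have hbodyM : body.Realize (Sum.elim (Sum.elim a c) (fun j => (dt j : M))) := by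
    have := (M₀.subtype.map_formula body (Sum.elim (Sum.elim at' ct) dt))
    rw [ElementarySubstructure.coe_subtype] at this
    have hcoe2 : (Subtype.val ∘ Sum.elim (Sum.elim at' ct) dt)
        = Sum.elim (Sum.elim a c) (fun j => (dt j : M)) := by
      funext x; rcases x with x | j
      · rcases x with i | i <;> rfl
      · rfl
    rw [hcoe2] at this
    exact this.2 hdt
  rw [hbody] at hbodyM
  obtain ⟨⟨hdP, hψd'⟩, e', hφe', hψe'⟩ := hbodyM
  exact hψe' (hiso₀ k ψ (fun j => (dt j : M))
    (fun j => ⟨(dt j).2, hdP j⟩) hψd' e' hφe')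

end RelCatPaper
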